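/- Let P be a finite set of n ≥ 1 points on the real line and S' a finite set of closed bounded intervals of ℝ such that no endpoint of an interval of S' coincides with a point of P, every interval of S' contains at least one point of P, and every one of the n+1 gaps determined by P contains an endpoint of some interval of S'. Let c denote the number of distinct codes (including the empty code, if some point of P is uncovered) realized by the points of P with respect to S'. Then |S'| ≥ |P| − c + 1; equivalently, |S'| ≥ Σ (|Q| − 1) + 1, where the sum ranges over the equivalence classes Q of points of P having equal code with respect to S'. -/

import Mathlib

/-- A closed bounded interval of `ℝ` is represented by its pair of endpoints;
a point `p` belongs to the interval `I` if `I.1 ≤ p ∧ p ≤ I.2`. -/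
def memI (p : ℝ) (I : ℝ × ℝ) : Prop := I.1 ≤ p ∧ p ≤ I.2

/-- The code of a point `p` with respect to a finite set `S` of intervals:
the set of intervals of `S` containing `p`. -/
def code (S : Finset (ℝ × ℝ)) (p : ℝ) : Set (ℝ × ℝ) := {I | I ∈ S ∧ memI p I}

/-- `S` is a discriminating code for `P`: every point of `P` has a nonempty code and
distinct points of `P` have distinct codes. -/
def Discr (S : Finset (ℝ × ℝ)) (P : Finset ℝ) : Prop :=
  (∀ p ∈ P, (code S p).Nonempty) ∧
    ∀ p ∈ P, ∀ q ∈ P, p ≠ q → code S p ≠ code S q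

/-- `G` is one of the `n+1` gaps determined by the point set `P`:
either `(-∞, min P)`, or `(max P, ∞)`, or the open interval between two
consecutive points of `P`. -/
def IsGap (P : Finset ℝ) (G : Set ℝ) : Prop :=
  (∃ h : P.Nonempty, G = Set.Iio (P.min' h)) ∨
  (∃ h : P.Nonempty, G = Set.Ioi (P.max' h)) ∨
  (∃ p ∈ P, ∃ q ∈ P, p < q ∧ (∀ r ∈ P, ¬ (p < r ∧ r < q)) ∧ G = Set.Ioo p q)

/-- Every gap determined by `P` contains an endpoint of some interval of `S`. -/
def GapsStabbed (P : Finset ℝ) (S : Finset (ℝ × ℝ)) : Prop :=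
  ∀ G : Set ℝ, IsGap P G → ∃ I ∈ S, I.1 ∈ G ∨ I.2 ∈ G

/-- If `p` has a class-mate `q < p`, then the gap just left of `p` contains
a *right* endpoint of some interval. -/
lemma key_right_endpoint (P : Finset ℝ) (S' : Finset (ℝ × ℝ))
    (hEnd : ∀ I ∈ S', ∀ p ∈ P, I.1 ≠ p ∧ I.2 ≠ p)
    (hPt : ∀ I ∈ S', ∃ p ∈ P, memI p I)
    (hStab : GapsStabbed P S')
    (p : ℝ) (hp : p ∈ P) (q : ℝ) (hq : q ∈ P) (hqp : q < p)
    (hcode : code S' q = code S' p) :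
    ∃ I ∈ S', I.2 < p ∧ ∀ r ∈ P, r < p → r < I.2 := by
  classical
  set T := P.filter (fun x => x < p) with hT
  have hqT : q ∈ T := by simp [hT, hq, hqp]
  have hTne : T.Nonempty := ⟨q, hqT⟩
  set m := T.max' hTne with hm
  have hmT : m ∈ T := T.max'_mem hTne
  have hmP : m ∈ P := (Finset.mem_filter.mp hmT).1
  have hmp : m < p := (Finset.mem_filter.mp hmT).2
  have hmax : ∀ r ∈ P, r < p → r ≤ m := fun r hr hrp =>
    T.le_max' r (by simp [hT, hr, hrp])
  have hgap : IsGap P (Set.Ioo m p) := by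
    right; right
    exact ⟨m, hmP, p, hp, hmp,
      fun r hr ⟨h1, h2⟩ => absurd (hmax r hr h2) (not_le.mpr h1), rfl⟩
  obtain ⟨I, hIS, hend⟩ := hStab _ hgap
  refine ⟨I, hIS, ?_⟩
  rcases hend with h1 | h2
  · exfalso
    obtain ⟨r, hr, hr1, hr2⟩ := hPt I hIS
    have hrI1 : I.1 ≠ r := (hEnd I hIS r hr).1
    have hrgt : I.1 < r := lt_of_le_of_ne hr1 hrI1
    have hrp : p ≤ r := by
      by_contra h
      push_neg at h
      exact absurd (hmax r hr h) (not_le.mpr (lt_trans h1.1 hrgt))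
    have hpI : memI p I := ⟨le_of_lt h1.2, le_trans hrp hr2⟩
    have hqm : q ≤ m := hmax q hq hqp
    have hIcp : I ∈ code S' p := ⟨hIS, hpI⟩
    rw [← hcode] at hIcp
    have : I.1 ≤ q := hIcp.2.1
    linarith [h1.1]
  · exact ⟨h2.2, fun r hr hrp => lt_of_le_of_lt (hmax r hr hrp) h2.1⟩

theorem stmt2 (P : Finset ℝ) (hP : P.Nonempty) (S' : Finset (ℝ × ℝ))
    (hIv : ∀ I ∈ S', I.1 ≤ I.2)
    (hEnd : ∀ I ∈ S', ∀ p ∈ P, I.1 ≠ p ∧ I.2 ≠ p)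
    (hPt : ∀ I ∈ S', ∃ p ∈ P, memI p I)
    (hStab : GapsStabbed P S') :
    P.card + 1 ≤ S'.card + (code S' '' (P : Set ℝ)).ncard := by
  classical
  set M := P.filter (fun p => ∀ q ∈ P, code S' q = code S' p → p ≤ q) with hM
  set D := P.filter (fun p => ¬ ∀ q ∈ P, code S' q = code S' p → p ≤ q) with hD
  have hcardsum : M.card + D.card = P.card :=
    Finset.card_filter_add_card_filter_not _
  -- Step A: M.card ≤ number of codes
  have hA : M.card ≤ (code S' '' (P : Set ℝ)).ncard := by
    have hinj : Set.InjOn (code S') ↑M := by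
      intro a ha b hb hab
      simp only [Finset.mem_coe, hM, Finset.mem_filter] at ha hb
      exact le_antisymm (ha.2 b hb.1 hab.symm) (hb.2 a ha.1 hab)
    calc M.card = (code S' '' (↑M : Set ℝ)).ncard := by
          rw [Set.ncard_image_of_injOn hinj, Set.ncard_coe_finset]
      _ ≤ _ := Set.ncard_le_ncard
          (Set.image_mono (by
            intro x hx
            simp only [Finset.mem_coe, hM, Finset.mem_filter] at hx
            exact hx.1))
          (P.finite_toSet.image _)
  -- Step B: choose for each p ∈ D an interval with right endpoint just left of p
  have hchoice : ∀ p ∈ D, ∃ I ∈ S', I.2 < p ∧ ∀ r ∈ P, r < p → r < I.2 := by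
    intro p hp
    rw [hD, Finset.mem_filter] at hp
    obtain ⟨hpP, hnp⟩ := hp
    push_neg at hnp
    obtain ⟨q, hq, hcq, hqp⟩ := hnp
    exact key_right_endpoint P S' hEnd hPt hStab p hpP q hq hqp hcq
  choose! φ hφS hφlt hφmax using hchoice
  -- an interval with right endpoint beyond max P
  obtain ⟨J, hJS, hJend⟩ := hStab _ (Or.inr (Or.inl ⟨hP, rfl⟩))
  have hJ2 : P.max' hP < J.2 := by
    rcases hJend with h | h
    · exfalso
      obtain ⟨r, hr, hr1, _⟩ := hPt J hJS
      have : r ≤ P.max' hP := P.le_max' r hr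
      simp only [Set.mem_Ioi] at h
      linarith
    · simpa using h
  -- injection D ↪ S'.erase J
  have hB : D.card ≤ (S'.erase J).card := by
    apply Finset.card_le_card_of_injOn φ
    · intro p hp
      refine Finset.mem_erase.mpr ⟨?_, hφS p hp⟩
      intro hEq
      have hpP : p ∈ P := (Finset.mem_filter.mp hp).1
      have h1 : p ≤ P.max' hP := P.le_max' p hpP
      have h2 := hφlt p hp
      rw [hEq] at h2
      linarith
    · intro a ha b hb hab
      by_contra hne
      rcases lt_or_gt_of_ne hne with h | h
      · have h1 := hφlt a ha
        have h2 := hφmax b hb a (Finset.mem_filter.mp ha).1 h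
        rw [hab] at h1; linarith
      · have h1 := hφlt b hb
        have h2 := hφmax a ha b (Finset.mem_filter.mp hb).1 h
        rw [hab] at h2; linarith
  have hErase : (S'.erase J).card = S'.card - 1 := Finset.card_erase_of_mem hJS
  have hJpos : 1 ≤ S'.card := Finset.card_pos.mpr ⟨J, hJS⟩
  omega
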